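/- For a bi-infinite strictly increasing knot sequence (t_j), for every degree m ≥ 0 and every u with t_k ≤ u < t_{k+1}, the sum of the B-spline basis functions N_{mi}(u) over all indices i with k - m ≤ i ≤ k equals 1 (partition of unity). -/
import Mathlib


/-- B-spline basis functions `N_{m,i}` over a bi-infinite knot sequence `t`,
defined by the Boor–Mansfield–Cox recursion:
`N_{0,i}(u) = 1` if `u ∈ [t i, t (i+1))` and `0` otherwise, and
`N_{m,i}(u) = (u - tᵢ)/(t_{m+i} - tᵢ) · N_{m-1,i}(u)
  + (t_{m+i+1} - u)/(t_{m+i+1} - t_{i+1}) · N_{m-1,i+1}(u)`. -/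
noncomputable def bsplineN (t : ℤ → ℝ) : ℕ → ℤ → ℝ → ℝ
  | 0, i, u => if t i ≤ u ∧ u < t (i + 1) then 1 else 0
  | m + 1, i, u =>
      (u - t i) / (t (i + (m + 1)) - t i) * bsplineN t m i u +
        (t (i + (m + 1) + 1) - u) / (t (i + (m + 1) + 1) - t (i + 1)) *
          bsplineN t m (i + 1) u

/-- `N_{m,i}(u) = 0` when `u < t i`. -/
lemma bsplineN_eq_zero_left (t : ℤ → ℝ) (ht : StrictMono t) :
    ∀ (m : ℕ) (i : ℤ) (u : ℝ), u < t i → bsplineN t m i u = 0 := by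
  intro m
  induction m with
  | zero =>
    intro i u h
    simp only [bsplineN]
    rw [if_neg]
    rintro ⟨h1, _⟩; linarith
  | succ m ih =>
    intro i u h
    rw [bsplineN, ih i u h, ih (i + 1) u (h.trans (ht (by omega)))]
    ring

/-- `N_{m,i}(u) = 0` when `t (i + m + 1) ≤ u`. -/
lemma bsplineN_eq_zero_right (t : ℤ → ℝ) (ht : StrictMono t) :
    ∀ (m : ℕ) (i : ℤ) (u : ℝ), t (i + (m : ℤ) + 1) ≤ u → bsplineN t m i u = 0 := by
  intro m
  induction m with
  | zero =>
    intro i u h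
    simp only [Nat.cast_zero, add_zero] at h
    simp only [bsplineN]
    rw [if_neg]
    rintro ⟨_, h2⟩; linarith
  | succ m ih =>
    intro i u h
    push_cast at h
    have h1 : bsplineN t m i u = 0 := ih i u (le_trans (ht.monotone (by omega)) h)
    have h2 : bsplineN t m (i + 1) u = 0 := by
      apply ih
      have e : i + 1 + (m : ℤ) + 1 = i + ((m : ℤ) + 1) + 1 := by ring
      rw [e]; exact h
    rw [bsplineN, h1, h2]; ring

/-- Partition of unity: for every degree `m` and every `u ∈ [t k, t (k+1))`,
the B-spline basis functions `N_{m,i}` for `k - m ≤ i ≤ k` sum to `1`. -/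
theorem stmt9 (t : ℤ → ℝ) (ht : StrictMono t) (m : ℕ) (k : ℤ) (u : ℝ)
    (hu₀ : t k ≤ u) (hu₁ : u < t (k + 1)) :
    ∑ i ∈ Finset.Icc (k - m) k, bsplineN t m i u = 1 := by
  induction m with
  | zero =>
    simp only [Nat.cast_zero, sub_zero, Finset.Icc_self, Finset.sum_singleton]
    simp [bsplineN, hu₀, hu₁]
  | succ m ih =>
    -- coefficient function for the shifted second term
    set g : ℤ → ℝ := fun j => (t (j + (m : ℤ) + 1) - u) / (t (j + (m : ℤ) + 1) - t j) *
      bsplineN t m j u with hg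
    set f : ℤ → ℝ := fun i => (u - t i) / (t (i + ((m : ℤ) + 1)) - t i) * bsplineN t m i u
      with hf
    have hcast : (((m : ℕ) + 1 : ℕ) : ℤ) = (m : ℤ) + 1 := by push_cast; ring
    have hsplit : ∀ i : ℤ, bsplineN t (m + 1) i u = f i + g (i + 1) := by
      intro i
      rw [bsplineN, hf, hg]
      simp only [hcast]
      have e1 : i + 1 + (m : ℤ) + 1 = i + ((m : ℤ) + 1) + 1 := by ring
      rw [e1]
    have hIcc : k - ((m : ℕ) + 1 : ℕ) = k - (m : ℤ) - 1 := by push_cast; ring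
    rw [hIcc]
    have hle : k - (m : ℤ) - 1 ≤ k := by omega
    calc ∑ i ∈ Finset.Icc (k - (m : ℤ) - 1) k, bsplineN t (m + 1) i u
        = ∑ i ∈ Finset.Icc (k - (m : ℤ) - 1) k, (f i + g (i + 1)) := by
          exact Finset.sum_congr rfl fun i _ => hsplit i
      _ = (∑ i ∈ Finset.Icc (k - (m : ℤ) - 1) k, f i) +
          ∑ i ∈ Finset.Icc (k - (m : ℤ) - 1) k, g (i + 1) := Finset.sum_add_distrib
      _ = (∑ i ∈ Finset.Icc (k - (m : ℤ) - 1) k, f i) +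
          ∑ j ∈ Finset.Icc (k - (m : ℤ)) (k + 1), g j := by
          congr 1
          have hmap : Finset.Icc (k - (m : ℤ)) (k + 1) =
              (Finset.Icc (k - (m : ℤ) - 1) k).map (addRightEmbedding 1) := by
            rw [Finset.map_add_right_Icc]
            congr 1
            ring
          rw [hmap, Finset.sum_map]
          rfl
      _ = (f (k - (m : ℤ) - 1) + ∑ i ∈ Finset.Icc (k - (m : ℤ)) k, f i) +
          ((∑ j ∈ Finset.Icc (k - (m : ℤ)) k, g j) + g (k + 1)) := by
          congr 1
          · have : Finset.Icc (k - (m : ℤ) - 1) k = insert (k - (m : ℤ) - 1)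
                (Finset.Icc (k - (m : ℤ)) k) := by
              ext x; simp [Finset.mem_Icc]; omega
            rw [this, Finset.sum_insert (by simp [Finset.mem_Icc])]
          · have : Finset.Icc (k - (m : ℤ)) (k + 1) = insert (k + 1)
                (Finset.Icc (k - (m : ℤ)) k) := by
              ext x; simp [Finset.mem_Icc]; omega
            rw [this, Finset.sum_insert (by simp [Finset.mem_Icc])]
            ring
      _ = ∑ i ∈ Finset.Icc (k - (m : ℤ)) k, (f i + g i) := by
          have hf0 : f (k - (m : ℤ) - 1) = 0 := by
            have : bsplineN t m (k - (m : ℤ) - 1) u = 0 := by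
              apply bsplineN_eq_zero_right t ht
              have e : k - (m : ℤ) - 1 + (m : ℤ) + 1 = k := by ring
              rw [e]; exact hu₀
            simp only [hf]
            rw [this]; ring
          have hg0 : g (k + 1) = 0 := by
            have : bsplineN t m (k + 1) u = 0 := bsplineN_eq_zero_left t ht m (k + 1) u hu₁
            simp only [hg]
            rw [this]; ring
          rw [hf0, hg0, zero_add, add_zero, ← Finset.sum_add_distrib]
      _ = ∑ i ∈ Finset.Icc (k - (m : ℤ)) k, bsplineN t m i u := by
          apply Finset.sum_congr rfl
          intro i _
          simp only [hf, hg]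
          have hne : t (i + ((m : ℤ) + 1)) - t i ≠ 0 := by
            have := ht (show i < i + ((m : ℤ) + 1) by omega)
            linarith
          have e : i + (m : ℤ) + 1 = i + ((m : ℤ) + 1) := by ring
          rw [e]
          field_simp
          ring
      _ = 1 := ih
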